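/- Let V be a real inner product space with almost contact metric structure (φ, ξ, η), S symmetric with Sξ = αξ + βU (U ⊥ ξ unit, β ≠ 0), and suppose SU = βξ, SφU = 0, and SX = 0 for all X ⊥ ξ, U, φU (ruled form). Then for every X ⊥ ξ and every Y ∈ V, F_X^{(k)}(L_ξ Y) - L_ξ(F_X^{(k)}Y) = 0, where L_ξ = φS - Sφ and F_X^{(k)}Y = ⟨φSX,Y⟩ξ - η(Y)φSX - kη(X)φY with k ≠ 0. -/

import Mathlib

open RealInnerProductSpace

/-- Converse direction of Theorem 1.2 for ruled hypersurfaces: if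
`Sξ = αξ + βU`, `SU = βξ`, `SφU = 0` and `S = 0` on `C_U`, then the Cho
commutator `F_X^{(k)} L_ξ Y - L_ξ F_X^{(k)} Y` vanishes for `X ⊥ ξ`. -/
theorem stmt_16 {V : Type*} [NormedAddCommGroup V] [InnerProductSpace ℝ V]
    [FiniteDimensional ℝ V]
    (φ S : V →ₗ[ℝ] V) (ξ U : V) (α β k : ℝ)
    (hφ2 : ∀ X : V, φ (φ X) = -X + ⟪X, ξ⟫ • ξ)
    (hξ : ⟪ξ, ξ⟫ = 1)
    (hmetric : ∀ X Y : V, ⟪φ X, φ Y⟫ = ⟪X, Y⟫ - ⟪X, ξ⟫ * ⟪Y, ξ⟫)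
    (hskew : ∀ X Y : V, ⟪φ X, Y⟫ = -⟪X, φ Y⟫)
    (hφξ : φ ξ = 0)
    (hsym : ∀ X Y : V, ⟪S X, Y⟫ = ⟪X, S Y⟫)
    (hSξ : S ξ = α • ξ + β • U)
    (hUξ : ⟪U, ξ⟫ = 0) (hU : ‖U‖ = 1)
    (hβ : β ≠ 0) (hk : k ≠ 0)
    (hSU : S U = β • ξ)
    (hSφU : S (φ U) = 0)
    (hruled : ∀ X : V, ⟪X, ξ⟫ = 0 → ⟪X, U⟫ = 0 → ⟪X, φ U⟫ = 0 → S X = 0) :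
    ∀ X Y : V, ⟪X, ξ⟫ = 0 →
      ((⟪φ (S X), φ (S Y) - S (φ Y)⟫ • ξ
          - ⟪φ (S Y) - S (φ Y), ξ⟫ • φ (S X)
          - (k * ⟪X, ξ⟫) • φ (φ (S Y) - S (φ Y)))
        - (φ (S (⟪φ (S X), Y⟫ • ξ - ⟪Y, ξ⟫ • φ (S X) - (k * ⟪X, ξ⟫) • φ Y))
          - S (φ (⟪φ (S X), Y⟫ • ξ - ⟪Y, ξ⟫ • φ (S X) - (k * ⟪X, ξ⟫) • φ Y)))) = 0 := by
  have hUU : ⟪U, U⟫ = 1 := by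
    have := real_inner_self_eq_norm_mul_norm U
    rw [hU] at this; simpa using this
  have hφUξ : ⟪φ U, ξ⟫ = 0 := by rw [hskew, hφξ]; simp
  have hUφU : ⟪U, φ U⟫ = 0 := by
    have h1 := hskew U U
    have h2 := real_inner_comm (φ U) U
    linarith
  have hφUφU : ⟪φ U, φ U⟫ = 1 := by rw [hmetric, hUU, hUξ]; ring
  have hkey : ∀ X : V, ⟪X, ξ⟫ = 0 → φ (S X) = 0 := by
    intro X hX
    set c := ⟪X, U⟫ with hc
    set d := ⟪X, φ U⟫ with hd
    have hW : S (X - c • U - d • φ U) = 0 := by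
      apply hruled
      · simp [inner_sub_left, real_inner_smul_left, hUξ, hφUξ, hX]
      · simp [inner_sub_left, real_inner_smul_left, hUU, ← hc,
          real_inner_comm (φ U) U, hUφU]
        rw [hU, real_inner_comm, hUφU]; ring
      · simp [inner_sub_left, real_inner_smul_left, hφUφU, ← hd, hUφU]
        rw [← real_inner_self_eq_norm_sq, hφUφU]; ring
    have hX' : X = (X - c • U - d • φ U) + c • U + d • φ U := by abel
    have hSX : S X = (c * β) • ξ := by
      rw [hX']
      simp [map_add, map_smul, hW, hSU, hSφU, smul_smul]
    rw [hSX, map_smul, hφξ, smul_zero]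
  intro X Y hX
  rw [hkey X hX, hX]
  simp
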